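/- Let E/F be an extension of finite fields of degree ℓ, and let B = {e_0, e_1, …, e_{ℓ−1}} be a self-dual basis of E over F, i.e., Tr_{E/F}(e_i e_j) = δ_{i,j} for all i, j. Let φ_B : E^n → F^{nℓ} be the F-linear map replacing each coordinate x = Σ_{i=0}^{ℓ−1} a_i e_i ∈ E by the ℓ-tuple (a_0, …, a_{ℓ−1}). Then a linear code C of length n over E is LCD (with respect to the Euclidean inner product over E) if and only if the linear code φ_B(C) of length nℓ over F is LCD (with respect to the Euclidean inner product over F). -/

import Mathlib

/-- The Euclidean dual of a code `C ⊆ R^n`: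
`C^⊥ = {x : x · c = 0 for all c ∈ C}` where `x · y = ∑ i, x i * y i`. -/
def dualCode {R : Type*} [CommRing R] {n : ℕ} (C : Submodule R (Fin n → R)) :
    Submodule R (Fin n → R) where
  carrier := {x | ∀ c ∈ C, ∑ i, x i * c i = 0}
  zero_mem' := by intro c hc; simp
  add_mem' := by
    intro a b ha hb c hc
    have h1 := ha c hc
    have h2 := hb c hc
    simp only [Pi.add_apply, add_mul, Finset.sum_add_distrib, h1, h2, add_zero]
  smul_mem' := by
    intro r x hx c hc
    have h1 := hx c hc
    simp only [Pi.smul_apply, smul_eq_mul, mul_assoc, ← Finset.mul_sum, h1, mul_zero]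

/-- A code is LCD (linear complementary dual) if `C ∩ C^⊥ = {0}`. -/
def IsLCD {R : Type*} [CommRing R] {n : ℕ} (C : Submodule R (Fin n → R)) : Prop :=
  C ⊓ dualCode C = ⊥

/-- Euclidean dual of a code whose codewords are `n × m` matrices, with respect to
the inner product summing the entrywise products over all entries. -/
def dualMatCode {F : Type*} [Field F] {n m : ℕ}
    (C : Submodule F (Matrix (Fin n) (Fin m) F)) :
    Submodule F (Matrix (Fin n) (Fin m) F) where
  carrier := {X | ∀ Y ∈ C, ∑ r, ∑ j, X r j * Y r j = 0}
  zero_mem' := by intro Y hY; simp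
  add_mem' := by
    intro X X' hX hX' Y hY
    have h1 := hX Y hY
    have h2 := hX' Y hY
    simp only [Matrix.add_apply, add_mul, Finset.sum_add_distrib, h1, h2, add_zero]
  smul_mem' := by
    intro r X hX Y hY
    have h1 := hX Y hY
    simp only [Matrix.smul_apply, smul_eq_mul, mul_assoc, ← Finset.mul_sum, h1, mul_zero]

/-- LCD property for codes of matrix codewords. -/
def IsLCDMat {F : Type*} [Field F] {n m : ℕ}
    (C : Submodule F (Matrix (Fin n) (Fin m) F)) : Prop :=
  C ⊓ dualMatCode C = ⊥

/-- Projection over a basis: `φ_B` replaces each coordinate `x = ∑ i, a_i e_i ∈ E`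
of a vector in `E^n` by the `ℓ`-tuple `(a_0, …, a_{ℓ-1})` of its coordinates in the
basis `B = (e_0, …, e_{ℓ-1})` of `E` over `F`. -/
noncomputable def phiB {F E : Type*} [Field F] [Field E] [Algebra F E] {ℓ : ℕ}
    (b : Module.Basis (Fin ℓ) F E) {n : ℕ} : (Fin n → E) →ₗ[F] Matrix (Fin n) (Fin ℓ) F where
  toFun x := Matrix.of fun s i => b.repr (x s) i
  map_add' x y := by ext s i; simp
  map_smul' r x := by ext s i; simp

/-- Let `E/F` be an extension of finite fields of degree `ℓ` and `B` a self-dual basis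
of `E` over `F` (i.e. `Tr_{E/F}(e_i e_j) = δ_{ij}`). A linear code `C` of length `n`
over `E` is LCD if and only if the linear code `φ_B(C)` of length `nℓ` over `F`
is LCD. -/

lemma trace_mul_eq_sum_repr {F E : Type*} [Field F] [Field E] [Algebra F E] {ℓ : ℕ}
    (b : Module.Basis (Fin ℓ) F E)
    (hb : ∀ i j, Algebra.trace F E (b i * b j) = if i = j then 1 else 0)
    (u v : E) :
    Algebra.trace F E (u * v) = ∑ i, b.repr u i * b.repr v i := by
  conv_lhs => rw [← b.sum_repr u, ← b.sum_repr v]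
  rw [Finset.sum_mul_sum]
  rw [map_sum]
  simp only [map_sum, smul_mul_smul_comm, map_smul, hb, smul_eq_mul, mul_ite, mul_one,
    mul_zero, Finset.sum_ite_eq, Finset.mem_univ, if_true]

lemma phiB_inner {F E : Type*} [Field F] [Field E] [Algebra F E] {ℓ n : ℕ}
    (b : Module.Basis (Fin ℓ) F E)
    (hb : ∀ i j, Algebra.trace F E (b i * b j) = if i = j then 1 else 0)
    (x y : Fin n → E) :
    ∑ s, ∑ i, (phiB b x) s i * (phiB b y) s i = Algebra.trace F E (∑ s, x s * y s) := by
  rw [map_sum]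
  refine Finset.sum_congr rfl fun s _ => ?_
  exact (trace_mul_eq_sum_repr b hb (x s) (y s)).symm

lemma eq_zero_of_trace_basis_mul {F E : Type*} [Field F] [Field E] [Algebra F E] {ℓ : ℕ}
    (b : Module.Basis (Fin ℓ) F E)
    (hb : ∀ i j, Algebra.trace F E (b i * b j) = if i = j then 1 else 0)
    (t : E) (h : ∀ j, Algebra.trace F E (b j * t) = 0) : t = 0 := by
  refine b.ext_elem fun j => ?_
  have := trace_mul_eq_sum_repr b hb (b j) t
  rw [h j] at this
  simp only [Module.Basis.repr_self] at this
  rw [map_zero]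
  simp only [Finsupp.coe_zero, Pi.zero_apply]
  have : (0:F) = ∑ i, (Finsupp.single j (1:F)) i * b.repr t i := this
  rw [this]
  simp [Finsupp.single_apply, Finset.sum_ite_eq]

theorem lcd_iff_lcd_of_selfDualBasis {F E : Type*} [Field F] [Fintype F]
    [Field E] [Fintype E] [Algebra F E] {ℓ n : ℕ}
    (hdeg : Module.finrank F E = ℓ)
    (b : Module.Basis (Fin ℓ) F E)
    (hb : ∀ i j, Algebra.trace F E (b i * b j) = if i = j then 1 else 0)
    (C : Submodule E (Fin n → E)) :
    IsLCD C ↔ IsLCDMat (Submodule.map (phiB b) (C.restrictScalars F)) := by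
  have phiB_inj : ∀ x : Fin n → E, phiB b x = 0 → x = 0 := by
    intro x hx
    funext s
    refine b.ext_elem fun i => ?_
    have : b.repr (x s) i = 0 := by change (phiB b x) s i = 0; rw [hx]; rfl
    simpa using this
  constructor
  · intro hC
    rw [IsLCDMat, eq_bot_iff]
    rintro X ⟨hX1, hX2⟩
    obtain ⟨x, hxC, rfl⟩ := hX1
    have hxC' : x ∈ C := hxC
    have hxd : x ∈ dualCode C := by
      intro c hc
      refine eq_zero_of_trace_basis_mul b hb _ fun j => ?_
      have hmem : (b j) • c ∈ C := C.smul_mem (b j) hc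
      have hY : phiB b ((b j) • c) ∈ Submodule.map (phiB b) (C.restrictScalars F) :=
        ⟨(b j) • c, hmem, rfl⟩
      have h0 := hX2 _ hY
      rw [phiB_inner b hb] at h0
      rw [show (b j) * ∑ i, x i * c i = ∑ s, x s * ((b j) • c) s by
        rw [Finset.mul_sum]; exact Finset.sum_congr rfl fun s _ => by
          simp [smul_eq_mul]; ring]
      exact h0
    have : x = 0 := by
      have := hC ▸ (Submodule.mem_inf.mpr ⟨hxC', hxd⟩)
      simpa using this
    simp [this]
  · intro hC
    rw [IsLCD, eq_bot_iff]
    rintro x ⟨hx1, hx2⟩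
    have hmem : phiB b x ∈ Submodule.map (phiB b) (C.restrictScalars F) := ⟨x, hx1, rfl⟩
    have hdual : phiB b x ∈ dualMatCode (Submodule.map (phiB b) (C.restrictScalars F)) := by
      rintro Y ⟨c, hcC, rfl⟩
      rw [phiB_inner b hb]
      have : ∑ s, x s * c s = 0 := hx2 c hcC
      rw [this, map_zero]
    have : phiB b x = 0 := by
      have := hC ▸ (Submodule.mem_inf.mpr ⟨hmem, hdual⟩)
      simpa using this
    have := phiB_inj x this
    simp [this]
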